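/- Let ω ∈ ℝ, g > 0, and let Q, P, ξ, π : ℝ → ℝ be differentiable functions satisfying the Hamilton equations Q' = P, P' = −ω²Q + √(g/2)(π + ξ), ξ' = ξ − √(g/2)Q, and π' = −π + √(g/2)Q on ℝ. Then Q is four times differentiable and satisfies Q''''(t) + (ω² − 1)Q''(t) + (g − ω²)Q(t) = 0 for all t ∈ ℝ. -/

import Mathlib

/-- The Hamilton equations of the nonlocal harmonic oscillator imply that `Q`
is four times differentiable and satisfies
`Q'''' + (ω²−1)Q'' + (g−ω²)Q = 0`. -/
theorem stmt16 (ω g : ℝ) (hg : 0 < g) (Q P ξ π : ℝ → ℝ)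
    (hQ : Differentiable ℝ Q) (hP : Differentiable ℝ P)
    (hξ : Differentiable ℝ ξ) (hπ : Differentiable ℝ π)
    (h1 : ∀ t : ℝ, deriv Q t = P t)
    (h2 : ∀ t : ℝ, deriv P t = -(ω ^ 2) * Q t + Real.sqrt (g / 2) * (π t + ξ t))
    (h3 : ∀ t : ℝ, deriv ξ t = ξ t - Real.sqrt (g / 2) * Q t)
    (h4 : ∀ t : ℝ, deriv π t = -π t + Real.sqrt (g / 2) * Q t) :
    (Differentiable ℝ (deriv Q) ∧ Differentiable ℝ (deriv (deriv Q)) ∧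
      Differentiable ℝ (deriv (deriv (deriv Q)))) ∧
    ∀ t : ℝ, deriv (deriv (deriv (deriv Q))) t + (ω ^ 2 - 1) * deriv (deriv Q) t
        + (g - ω ^ 2) * Q t = 0 := by
  set c := Real.sqrt (g / 2) with hc
  have hc2 : c * c = g / 2 := Real.mul_self_sqrt (by linarith)
  have hdQ : deriv Q = P := funext h1
  have hD2 : deriv (deriv Q) = fun t => -(ω ^ 2) * Q t + c * (π t + ξ t) := by
    rw [hdQ]; exact funext h2
  have hD2diff : Differentiable ℝ (deriv (deriv Q)) := by
    rw [hD2]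
    exact (hQ.const_mul _).add ((hπ.add hξ).const_mul _)
  have hD3 : deriv (deriv (deriv Q)) = fun t => -(ω ^ 2) * P t + c * (ξ t - π t) := by
    funext t
    rw [hD2]
    have : deriv (fun t => -(ω ^ 2) * Q t + c * (π t + ξ t)) t
        = -(ω ^ 2) * deriv Q t + c * (deriv π t + deriv ξ t) := by
      rw [deriv_fun_add ((hQ t).const_mul _) ((show DifferentiableAt ℝ (fun y => π y + ξ y) t from (hπ t).add (hξ t)).const_mul _),
        deriv_const_mul _ (hQ t), deriv_const_mul _ (show DifferentiableAt ℝ (fun y => π y + ξ y) t from (hπ t).add (hξ t)),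
        deriv_fun_add (hπ t) (hξ t)]
    rw [this, h1, h3, h4]; ring
  have hD3diff : Differentiable ℝ (deriv (deriv (deriv Q))) := by
    rw [hD3]
    exact (hP.const_mul _).add ((hξ.sub hπ).const_mul _)
  refine ⟨⟨hdQ ▸ hP, hD2diff, hD3diff⟩, fun t => ?_⟩
  have hD4 : deriv (deriv (deriv (deriv Q))) t
      = -(ω ^ 2) * deriv P t + c * (deriv ξ t - deriv π t) := by
    rw [hD3]
    rw [deriv_fun_add ((hP t).const_mul _) ((show DifferentiableAt ℝ (fun y => ξ y - π y) t from (hξ t).sub (hπ t)).const_mul _),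
      deriv_const_mul _ (hP t), deriv_const_mul _ (show DifferentiableAt ℝ (fun y => ξ y - π y) t from (hξ t).sub (hπ t)),
      deriv_fun_sub (hξ t) (hπ t)]
  rw [hD4, hD2, h2, h3, h4]
  simp only
  linear_combination (-2 * Q t) * hc2
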